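/- If an Easton-support iteration of length κ (κ Mahlo) has the property that at every stage α < κ the iterand has cardinality at most α⁺, then the full iteration has cardinality at most κ and satisfies the κ-chain condition. (Abstract version: a κ-length direct-limit system over a Mahlo κ whose initial segments at inaccessible stages have size < κ, yields a structure of size κ in which every antichain has size < κ.) -/

import Mathlib

/-- The ordinal `α` is an inaccessible cardinal: it is (the ordinal of) a
regular strong limit uncountable cardinal. -/
def IsInaccOrd (α : Ordinal.{0}) : Prop :=
  α.card.IsRegular ∧ α.card.IsStrongLimit ∧ Cardinal.aleph0 < α.card ∧ α = α.card.ord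

/-- `C` is a club (closed unbounded) subset of the ordinal `κ`. -/
def IsClubIn (κ : Ordinal.{0}) (C : Set Ordinal.{0}) : Prop :=
  C ⊆ Set.Iio κ ∧
  (∀ α < κ, ∃ γ ∈ C, α < γ) ∧
  (∀ β < κ, 0 < β → sSup (C ∩ Set.Iio β) = β → β ∈ C)

/-- `S` is stationary in `κ`: it meets every club of `κ`. -/
def IsStatIn (κ : Ordinal.{0}) (S : Set Ordinal.{0}) : Prop :=
  ∀ C, IsClubIn κ C → (S ∩ C).Nonempty

/-- The κ-length Easton-support system over the componentwise posets `Q`: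
functions whose support is contained in `κ`, bounded below `κ`, and bounded
below every inaccessible `α < κ`. -/
def EastonP (κ : Cardinal.{0}) (Q : Ordinal.{0} → Type) (one : ∀ α, Q α) : Type 1 :=
  {p : ∀ α : Ordinal.{0}, Q α //
    {α | p α ≠ one α} ⊆ Set.Iio κ.ord ∧
    (∃ β < κ.ord, {α | p α ≠ one α} ⊆ Set.Iio β) ∧
    ∀ α < κ.ord, IsInaccOrd α →
      ∃ β < α, {a | p a ≠ one a} ∩ Set.Iio α ⊆ Set.Iio β}

namespace Stmt17Aux

open Cardinal Set

lemma power_lt_of_sl {κ : Cardinal.{0}} (hsl : κ.IsStrongLimit) {a b : Cardinal.{0}}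
    (ha : a < κ) (hb : b < κ) : a ^ b < κ := by
  have h1 : a ^ b ≤ 2 ^ (a * b) := by
    rw [Cardinal.power_mul]
    exact Cardinal.power_le_power_right (Cardinal.cantor a).le
  rcases lt_or_ge (max a b) ℵ₀ with h | h
  · have h2 : a ^ b < ℵ₀ :=
      Cardinal.power_lt_aleph0 ((le_max_left a b).trans_lt h) ((le_max_right a b).trans_lt h)
    exact h2.trans_le hsl.aleph0_le
  · have hab : a * b ≤ max a b := by
      calc a * b ≤ max a b * max a b := mul_le_mul' (le_max_left a b) (le_max_right a b)
        _ = max a b := Cardinal.mul_eq_self h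
    calc a ^ b ≤ 2 ^ (a * b) := h1
      _ ≤ 2 ^ (max a b) := by
          apply Cardinal.power_le_power_left
          · norm_num
          · exact hab
      _ < κ := hsl.two_power_lt (max_lt ha hb)

lemma bounded_of_card_lt {κ : Cardinal.{0}} (hreg : κ.IsRegular) {s : Set Ordinal.{0}}
    (hsub : ∀ α ∈ s, α < κ.ord) (hcard : Cardinal.mk s < Cardinal.lift.{1} κ) :
    ∃ δ < κ.ord, ∀ α ∈ s, α < δ := by
  obtain ⟨m, hm, hms⟩ := Cardinal.lt_lift_iff.mp hcard
  have hlift : Cardinal.lift.{1} #m.out = Cardinal.lift.{0} #s := by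
    rw [Cardinal.mk_out, hms, Cardinal.lift_id']
  obtain ⟨e⟩ := Cardinal.lift_mk_eq'.mp hlift
  set f : m.out → Ordinal.{0} := fun i => (e i).1 + 1 with hf
  have hflt : ∀ i, f i < κ.ord := by
    intro i
    have := hsub _ (e i).2
    rw [hf]
    show (e i).1 + 1 < κ.ord
    rw [Ordinal.add_one_eq_succ]; exact (Cardinal.isSuccLimit_ord hreg.aleph0_le).succ_lt this
  have hsup : iSup f < κ.ord :=
    Cardinal.iSup_lt_ord_of_isRegular hreg (by rw [Cardinal.mk_out]; exact hm) hflt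
  refine ⟨iSup f, hsup, fun α hα => ?_⟩
  have h1 : f (e.symm ⟨α, hα⟩) ≤ iSup f := Ordinal.le_iSup f _
  rw [hf] at h1
  simp only [Equiv.apply_symm_apply] at h1
  calc α < α + 1 := by rw [Ordinal.add_one_eq_succ]; exact Order.lt_succ α
    _ ≤ iSup f := h1

lemma mk_pi_lt {κ : Cardinal.{0}} (hsl : κ.IsStrongLimit)
    (Q : Ordinal.{0} → Type)
    (hQ : ∀ α : Ordinal.{0}, α < κ.ord → Cardinal.mk (Q α) ≤ Order.succ α.card)
    {β : Ordinal.{0}} (hβ : β < κ.ord) :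
    Cardinal.mk (∀ γ : Set.Iio β, Q γ.1) < Cardinal.lift.{1} κ := by
  have hβc : β.card < κ := Cardinal.lt_ord.mp hβ
  have hsucc : Order.succ β.card < κ := hsl.isSuccLimit.succ_lt hβc
  have h1 : #(∀ γ : Set.Iio β, Q γ.1) ≤ Cardinal.lift.{1} ((Order.succ β.card) ^ β.card) := by
    rw [Cardinal.mk_pi]
    calc (Cardinal.prod fun γ : Set.Iio β => #(Q γ.1))
        ≤ Cardinal.prod fun _ : Set.Iio β => Order.succ β.card := by
          apply Cardinal.prod_le_prod
          intro γ
          exact (hQ γ.1 (γ.2.trans hβ)).trans (Order.succ_le_succ (Ordinal.card_le_card γ.2.le))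
      _ = Cardinal.lift.{1} (Order.succ β.card) ^ Cardinal.lift.{0} #(Set.Iio β) :=
          Cardinal.prod_const _ _
      _ = Cardinal.lift.{1} ((Order.succ β.card) ^ β.card) := by
          rw [Cardinal.lift_id', Ordinal.mk_Iio_ordinal, Cardinal.lift_power]
  exact h1.trans_lt (Cardinal.lift_lt.mpr (power_lt_of_sl hsl hsucc hβc))

lemma isClub_closure {κ : Cardinal.{0}} (hreg : κ.IsRegular) (hω : ℵ₀ < κ)
    (f : Ordinal.{0} → Ordinal.{0}) (hf : ∀ i, f i < κ.ord) :
    IsClubIn κ.ord {α | α < κ.ord ∧ 0 < α ∧ ∀ i < α, f i < α} := by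
  have hlim : Order.IsSuccLimit κ.ord := Cardinal.isSuccLimit_ord hreg.aleph0_le
  have hωκ : ℵ₀ ≤ Cardinal.lift.{1} κ := by
    rw [← Cardinal.lift_aleph0.{1, 0}]
    exact Cardinal.lift_le.mpr hreg.aleph0_le
  have step : ∀ x, x < κ.ord → ∃ y, y < κ.ord ∧ x < y ∧ ∀ i < x, f i < y := by
    intro x hx
    have hsub : ∀ α ∈ insert x (f '' Set.Iio x), α < κ.ord := by
      rintro α (rfl | ⟨i, _, rfl⟩)
      · exact hx
      · exact hf i
    have hcard : #(insert x (f '' Set.Iio x) : Set Ordinal.{0}) < Cardinal.lift.{1} κ := by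
      have h1 : #(insert x (f '' Set.Iio x) : Set Ordinal.{0}) ≤ #(f '' Set.Iio x) + 1 :=
        Cardinal.mk_insert_le
      have h2 : (#(f '' Set.Iio x) : Cardinal) ≤ #(Set.Iio x) := Cardinal.mk_image_le
      have h3 : #(Set.Iio x) = Cardinal.lift.{1} x.card := Ordinal.mk_Iio_ordinal x
      have hxκ : Cardinal.lift.{1} x.card < Cardinal.lift.{1} κ :=
        Cardinal.lift_lt.mpr (Cardinal.lt_ord.mp hx)
      refine lt_of_le_of_lt (h1.trans (add_le_add_left (h2.trans_eq h3) 1)) ?_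
      exact Cardinal.add_lt_of_lt hωκ hxκ (Cardinal.one_lt_aleph0.trans_le hωκ)
    obtain ⟨δ, hδ, hδb⟩ := bounded_of_card_lt hreg hsub hcard
    refine ⟨δ, hδ, hδb x (Set.mem_insert _ _), fun i hi => ?_⟩
    exact hδb (f i) (Set.mem_insert_of_mem _ (Set.mem_image_of_mem f hi))
  refine ⟨fun α hα => hα.1, ?_, ?_⟩
  · -- unbounded
    intro δ hδ
    let seq : ℕ → {x : Ordinal.{0} // x < κ.ord} := fun n =>
      Nat.rec ⟨δ + 1, by rw [Ordinal.add_one_eq_succ]; exact hlim.succ_lt hδ⟩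
        (fun _ ih => ⟨(step ih.1 ih.2).choose, (step ih.1 ih.2).choose_spec.1⟩) n
    have hseq : ∀ n, (seq n).1 < (seq (n + 1)).1 ∧ ∀ i < (seq n).1, f i < (seq (n + 1)).1 :=
      fun n => ⟨(step (seq n).1 (seq n).2).choose_spec.2.1,
        (step (seq n).1 (seq n).2).choose_spec.2.2⟩
    set γ : Ordinal.{0} := ⨆ n, (seq n).1 with hγ
    have hγκ : γ < κ.ord :=
      Cardinal.iSup_lt_ord_of_isRegular hreg (by simpa using hω) fun n => (seq n).2
    have hle : ∀ n, (seq n).1 ≤ γ := fun n => Ordinal.le_iSup (fun n => (seq n).1) n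
    have hδγ : δ < γ := by
      have h0 : δ < (seq 0).1 := by
        show δ < δ + 1
        rw [Ordinal.add_one_eq_succ]; exact Order.lt_succ δ
      exact h0.trans_le (hle 0)
    refine ⟨γ, ⟨hγκ, ?_, ?_⟩, hδγ⟩
    · exact lt_of_le_of_lt (zero_le (a := δ)) hδγ
    · intro i hi
      rw [hγ] at hi
      obtain ⟨n, hn⟩ := Ordinal.lt_iSup_iff.mp hi
      exact lt_of_lt_of_le ((hseq n).2 i hn) (hle (n + 1))
  · -- closed
    intro β hβ hβ0 hsup
    refine ⟨hβ, hβ0, fun i hi => ?_⟩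
    have hne : ({α | α < κ.ord ∧ 0 < α ∧ ∀ i < α, f i < α} ∩ Set.Iio β).Nonempty := by
      by_contra h
      rw [Set.not_nonempty_iff_eq_empty] at h
      rw [h] at hsup
      simp only [csSup_empty] at hsup
      exact absurd hsup.symm (ne_of_gt hβ0)
    rw [← hsup] at hi
    obtain ⟨ρ, hρ, hiρ⟩ := exists_lt_of_lt_csSup hne hi
    exact lt_trans (hρ.1.2.2 i hiρ) hρ.2

lemma pi_heq {Q : Ordinal.{0} → Type} {β β' : Ordinal.{0}} (h : β = β')
    {f : ∀ γ : Set.Iio β, Q γ.1} {f' : ∀ γ : Set.Iio β', Q γ.1} (hf : HEq f f')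
    {γ : Ordinal.{0}} (hγ : γ < β) (hγ' : γ < β') : f ⟨γ, hγ⟩ = f' ⟨γ, hγ'⟩ := by
  subst h; rw [eq_of_heq hf]

end Stmt17Aux

theorem stmt17 (κ : Cardinal.{0}) (hreg : κ.IsRegular) (hsl : κ.IsStrongLimit)
    (hMahlo : IsStatIn κ.ord {α | IsInaccOrd α})
    (Q : Ordinal.{0} → Type) (one : ∀ α, Q α)
    (hQ : ∀ α : Ordinal.{0}, α < κ.ord → Cardinal.mk (Q α) ≤ Order.succ α.card) :
    Cardinal.mk (EastonP κ Q one) ≤ Cardinal.lift.{1} κ ∧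
    ∀ A : Set (EastonP κ Q one),
      (∀ p ∈ A, ∀ q ∈ A, p ≠ q →
        ¬ ∀ α ∈ {a | p.1 a ≠ one a} ∩ {a | q.1 a ≠ one a}, p.1 α = q.1 α) →
      Cardinal.mk A < Cardinal.lift.{1} κ := by
  classical
  have hlim : Order.IsSuccLimit κ.ord := Cardinal.isSuccLimit_ord hreg.aleph0_le
  have hωκ : Cardinal.aleph0 ≤ Cardinal.lift.{1} κ := by
    rw [← Cardinal.lift_aleph0.{1, 0}]
    exact Cardinal.lift_le.mpr hreg.aleph0_le
  constructor
  · -- Part 1: cardinality bound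
    set T := Σ β : Set.Iio κ.ord, ∀ γ : Set.Iio β.1, Q γ.1 with hT
    have hbnd1 : ∀ p : EastonP κ Q one, (p.2.2.1).choose < κ.ord :=
      fun p => (p.2.2.1).choose_spec.1
    have hbnd2 : ∀ p : EastonP κ Q one, {α | p.1 α ≠ one α} ⊆ Set.Iio (p.2.2.1).choose :=
      fun p => (p.2.2.1).choose_spec.2
    set F : EastonP κ Q one → T := fun p => ⟨⟨(p.2.2.1).choose, hbnd1 p⟩, fun γ => p.1 γ.1⟩
      with hF
    have hFinj : Function.Injective F := by
      intro p q h
      have h1 : (p.2.2.1).choose = (q.2.2.1).choose := congrArg (fun x : T => x.1.1) h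
      have h2 : HEq (F p).2 (F q).2 := (Sigma.ext_iff.mp h).2
      apply Subtype.ext; funext γ
      by_cases hγ : γ < (p.2.2.1).choose
      · exact Stmt17Aux.pi_heq h1 h2 hγ (by rw [← h1]; exact hγ)
      · have hp : p.1 γ = one γ := by
          by_contra hc; exact hγ (hbnd2 p hc)
        have hq : q.1 γ = one γ := by
          by_contra hc; exact hγ (by rw [h1]; exact hbnd2 q hc)
        rw [hp, hq]
    calc Cardinal.mk (EastonP κ Q one) ≤ Cardinal.mk T := Cardinal.mk_le_of_injective hFinj
      _ = Cardinal.sum fun β : Set.Iio κ.ord => Cardinal.mk (∀ γ : Set.Iio β.1, Q γ.1) :=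
          Cardinal.mk_sigma _
      _ ≤ Cardinal.sum fun _ : Set.Iio κ.ord => Cardinal.lift.{1} κ :=
          Cardinal.sum_le_sum _ _ fun β => (Stmt17Aux.mk_pi_lt hsl Q hQ β.2).le
      _ = Cardinal.mk (Set.Iio κ.ord) * Cardinal.lift.{1} κ := Cardinal.sum_const' _ _
      _ = Cardinal.lift.{1} κ * Cardinal.lift.{1} κ := by
          rw [Ordinal.mk_Iio_ordinal, Cardinal.card_ord]
      _ = Cardinal.lift.{1} κ := Cardinal.mul_eq_self hωκ
  · -- Part 2: chain condition
    intro A hA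
    by_contra hlt
    push_neg at hlt
    have hω : Cardinal.aleph0 < κ := by
      have hclub : IsClubIn κ.ord {α | α < κ.ord ∧ 0 < α} := by
        refine ⟨fun α hα => hα.1, fun δ hδ => ⟨δ + 1, ⟨?_, ?_⟩, ?_⟩, fun β hβ hβ0 _ => ⟨hβ, hβ0⟩⟩
        · rw [Ordinal.add_one_eq_succ]; exact hlim.succ_lt hδ
        · exact lt_of_le_of_lt (zero_le (a := δ))
            (by rw [Ordinal.add_one_eq_succ]; exact Order.lt_succ δ)
        · rw [Ordinal.add_one_eq_succ]; exact Order.lt_succ δ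
      obtain ⟨α, hαI, hα⟩ := hMahlo _ hclub
      exact hαI.2.2.1.trans (Cardinal.lt_ord.mp hα.1)
    have hcard : Cardinal.mk (Set.Iio κ.ord) ≤ Cardinal.mk A := by
      rw [Ordinal.mk_Iio_ordinal, Cardinal.card_ord]; exact hlt
    obtain ⟨E⟩ := (Cardinal.le_def _ _).mp hcard
    set P : Set.Iio κ.ord → EastonP κ Q one := fun i => (E i).1 with hP
    have hPinj : Function.Injective P := fun i j h => E.injective (Subtype.ext h)
    have hPA : ∀ i, P i ∈ A := fun i => (E i).2
    set b' : Ordinal.{0} → Ordinal.{0} := fun i =>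
      if h : i < κ.ord then ((P ⟨i, h⟩).2.2.1).choose else 0 with hb'
    have hb'lt : ∀ i, b' i < κ.ord := by
      intro i; rw [hb']; dsimp only; split
      · exact ((P ⟨i, _⟩).2.2.1).choose_spec.1
      · exact hlim.pos
    have hb'supp : ∀ i (h : i < κ.ord), {a | (P ⟨i, h⟩).1 a ≠ one a} ⊆ Set.Iio (b' i) := by
      intro i h; rw [hb']; dsimp only; rw [dif_pos h]
      exact ((P ⟨i, h⟩).2.2.1).choose_spec.2
    set bh : ∀ α : Ordinal.{0}, α < κ.ord → Ordinal.{0} := fun α h =>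
      if hi : IsInaccOrd α then ((P ⟨α, h⟩).2.2.2 α h hi).choose else 0 with hbh
    have hbh1 : ∀ α (h : α < κ.ord), IsInaccOrd α → bh α h < α := by
      intro α h hi; rw [hbh]; dsimp only; rw [dif_pos hi]
      exact ((P ⟨α, h⟩).2.2.2 α h hi).choose_spec.1
    have hbh2 : ∀ α (h : α < κ.ord) (hi : IsInaccOrd α),
        {a | (P ⟨α, h⟩).1 a ≠ one a} ∩ Set.Iio α ⊆ Set.Iio (bh α h) := by
      intro α h hi; rw [hbh]; dsimp only; rw [dif_pos hi]
      exact ((P ⟨α, h⟩).2.2.2 α h hi).choose_spec.2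
    set F : Ordinal.{0} → Set Ordinal.{0} := fun β =>
      {α | ∃ h : α < κ.ord, IsInaccOrd α ∧ (∀ i < α, b' i < α) ∧ bh α h = β} with hFdef
    have key : ∀ β (x y : Ordinal.{0}) (hx : x ∈ F β) (hy : y ∈ F β), x < y →
        (fun γ : Set.Iio β => (P ⟨x, hx.choose⟩).1 γ.1) =
        (fun γ : Set.Iio β => (P ⟨y, hy.choose⟩).1 γ.1) → False := by
      intro β x y hx hy hxy hr
      obtain ⟨hy1, hyI, hycl, hyb⟩ := id hy
      have hne : P ⟨x, hx.choose⟩ ≠ P ⟨y, hy.choose⟩ := by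
        intro he
        exact absurd (congrArg Subtype.val (hPinj he)) (ne_of_lt hxy)
      refine hA _ (hPA _) _ (hPA _) hne (fun γ hγ => ?_)
      obtain ⟨hγp, hγq⟩ := hγ
      have hγ1 : γ < b' x := hb'supp x hx.choose hγp
      have hγ2 : γ < y := hγ1.trans (hycl x hxy)
      have hγ3 : γ < β := by
        have h4 : γ < bh y hy.choose := hbh2 y hy.choose hyI ⟨hγq, hγ2⟩
        exact lt_of_lt_of_eq h4 hyb
      exact congrFun hr ⟨γ, hγ3⟩
    have hFbound : ∀ β, ∃ δ < κ.ord, ∀ α ∈ F β, α < δ := by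
      intro β
      by_cases hβ : β < κ.ord
      · have hsub : ∀ α ∈ F β, α < κ.ord := fun α hα => hα.choose
        have hinj : Function.Injective
            (fun α : F β => fun γ : Set.Iio β => (P ⟨α.1, α.2.choose⟩).1 γ.1) := by
          intro x y hr
          rcases lt_trichotomy x.1 y.1 with h | h | h
          · exact absurd hr (fun hr => key β x.1 y.1 x.2 y.2 h hr)
          · exact Subtype.ext h
          · exact absurd hr.symm (fun hr => key β y.1 x.1 y.2 x.2 h hr)
        have hcard2 : Cardinal.mk (F β) < Cardinal.lift.{1} κ :=
          (Cardinal.mk_le_of_injective hinj).trans_lt (Stmt17Aux.mk_pi_lt hsl Q hQ hβ)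
        exact Stmt17Aux.bounded_of_card_lt hreg hsub hcard2
      · refine ⟨1, ?_, fun α hα => ?_⟩
        · rw [Cardinal.lt_ord]
          simpa using Cardinal.one_lt_aleph0.trans_le hreg.aleph0_le
        · exfalso
          obtain ⟨h1, hI, _, hb⟩ := hα
          exact hβ (hb ▸ ((hbh1 α h1 hI).trans h1))
    set g : Ordinal.{0} → Ordinal.{0} := fun β => (hFbound β).choose with hg
    have hg1 : ∀ β, g β < κ.ord := fun β => (hFbound β).choose_spec.1
    have hg2 : ∀ β, ∀ α ∈ F β, α < g β := fun β => (hFbound β).choose_spec.2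
    set f : Ordinal.{0} → Ordinal.{0} := fun i => max (b' i) (g i) with hfdef
    have hfκ : ∀ i, f i < κ.ord := fun i => max_lt (hb'lt i) (hg1 i)
    obtain ⟨α, hαI, hακ, hα0, hαcl⟩ := hMahlo _ (Stmt17Aux.isClub_closure hreg hω f hfκ)
    have hb'cl : ∀ i < α, b' i < α := fun i hi => (le_max_left _ _).trans_lt (hαcl i hi)
    have hβ0 : bh α hακ < α := hbh1 α hακ hαI
    have hmem : α ∈ F (bh α hακ) := ⟨hακ, hαI, hb'cl, rfl⟩
    have h1 : α < g (bh α hακ) := hg2 _ α hmem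
    have h2 : g (bh α hακ) < α := (le_max_right _ _).trans_lt (hαcl _ hβ0)
    exact absurd h1 (not_lt.mpr h2.le)
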